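/- Let L ∈ G(d,k) with 1 ≤ k < d, and let f : ℝ^d → [0,∞) be measurable. For any δ-plate L_δ(a) (the δ-neighborhood of (L + a) ∩ B(a,1/2)) and any r ∈ [1,∞], ∫_{L_δ(a)} f dx ≤ C δ^{(d-k)/r'} ( ∫_{L^⊥} ( ∫_{L+y} f(x) dLeb^k(x) )^r dLeb^{d-k}(y) )^{1/r}, where r' is the conjugate exponent of r and C depends only on d. -/

import Mathlib

open MeasureTheory Set Metric ENNReal

noncomputable section

abbrev Ed (d : ℕ) := EuclideanSpace ℝ (Fin d)

instance (d : ℕ) : MeasurableSpace (Submodule ℝ (Ed d)) := ⊤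

/-- `γ` is the invariant probability measure on the Grassmannian `G(d,k)`. -/
def IsGrassmannianMeasure (d k : ℕ) (γ : Measure (Submodule ℝ (Ed d))) : Prop :=
  IsProbabilityMeasure γ ∧
    (∀ θ : Ed d ≃ₗᵢ[ℝ] Ed d,
      Measure.map (fun L => Submodule.map (θ.toLinearEquiv : Ed d →ₗ[ℝ] Ed d) L) γ = γ) ∧
    γ {L | Module.finrank ℝ L = k}ᶜ = 0

/-- The `δ`-plate `L_δ(a)`: the `δ`-neighborhood of `(L + a) ∩ B(a, 1/2)`. -/
def plate (d : ℕ) (L : Submodule ℝ (Ed d)) (δ : ℝ) (a : Ed d) : Set (Ed d) :=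
  Metric.thickening δ ({x | x - a ∈ L} ∩ Metric.closedBall a (1 / 2))

/-- The plate-average maximal operator `M^k_δ`. -/
def maxOp (d : ℕ) (δ : ℝ) (f : Ed d → ℝ≥0∞) (L : Submodule ℝ (Ed d)) : ℝ≥0∞ :=
  ⨆ a : Ed d, (volume (plate d L δ a))⁻¹ * ∫⁻ x in plate d L δ a, f x

set_option maxHeartbeats 2000000
open scoped InnerProductSpace

lemma fubini_orth (d : ℕ) (L : Submodule ℝ (Ed d)) (f : Ed d → ℝ≥0∞) (hf : Measurable f) :
    ∫⁻ x, f x = ∫⁻ y : (Lᗮ : Submodule ℝ (Ed d)),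
      ∫⁻ x : (L : Submodule ℝ (Ed d)), f ((x : Ed d) + (y : Ed d)) := by
  have hcompl : IsCompl (Lᗮ : Submodule ℝ (Ed d)) L :=
    (Submodule.isCompl_orthogonal_of_hasOrthogonalProjection (K := L)).symm
  set P := (Lᗮ : Submodule ℝ (Ed d))
  let Φ₀ : (↥P × ↥L) ≃ₗ[ℝ] Ed d := Submodule.prodEquivOfIsCompl _ _ hcompl
  let Φₗ : WithLp 2 (↥P × ↥L) ≃ₗ[ℝ] Ed d := (WithLp.linearEquiv 2 ℝ _).trans Φ₀
  have hΦapp : ∀ z : WithLp 2 (↥P × ↥L), Φₗ z = (z.fst : Ed d) + (z.snd : Ed d) := by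
    intro z; rfl
  have hΦinner : ∀ z w : WithLp 2 (↥P × ↥L), ⟪Φₗ z, Φₗ w⟫_ℝ = ⟪z, w⟫_ℝ := by
    intro z w
    rw [hΦapp, hΦapp, WithLp.prod_inner_apply]
    have h1 : ⟪(z.fst : Ed d), (w.snd : Ed d)⟫_ℝ = 0 :=
      Submodule.inner_left_of_mem_orthogonal w.snd.2 z.fst.2
    have h2 : ⟪(z.snd : Ed d), (w.fst : Ed d)⟫_ℝ = 0 :=
      Submodule.inner_right_of_mem_orthogonal z.snd.2 w.fst.2
    rw [inner_add_left, inner_add_right, inner_add_right, h1, h2]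
    simp [Submodule.coe_inner]
  let Φ : WithLp 2 (↥P × ↥L) ≃ₗᵢ[ℝ] Ed d :=
    LinearEquiv.isometryOfInner (𝕜 := ℝ) (E := WithLp 2 (↥P × ↥L)) (E' := Ed d) Φₗ hΦinner
  have hΦ : ∀ z : WithLp 2 (↥P × ↥L), Φ z = (z.fst : Ed d) + (z.snd : Ed d) := hΦapp
  let bP := stdOrthonormalBasis ℝ ↥P
  let bL := stdOrthonormalBasis ℝ ↥L
  let b := (bP.prod bL).map Φ
  have hbl : ∀ i, b (Sum.inl i) = ((bP i : Ed d)) := by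
    intro i
    show Φ ((bP.prod bL) (Sum.inl i)) = _
    rw [OrthonormalBasis.prod_apply]
    simp [hΦ]
  have hbr : ∀ i, b (Sum.inr i) = ((bL i : Ed d)) := by
    intro i
    show Φ ((bP.prod bL) (Sum.inr i)) = _
    rw [OrthonormalBasis.prod_apply]
    simp [hΦ]
  have hb : ∀ (p : Fin (Module.finrank ℝ ↥P) → ℝ) (q : Fin (Module.finrank ℝ ↥L) → ℝ),
      b.repr.symm ((WithLp.equiv 2 ((_ : Fin (Module.finrank ℝ ↥P) ⊕ Fin (Module.finrank ℝ ↥L)) → ℝ)).symm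
          ((MeasurableEquiv.sumPiEquivProdPi (fun _ => ℝ)).symm (p, q)))
        = ((bL.repr.symm ((WithLp.equiv 2 _).symm q) : ↥L) : Ed d)
          + ((bP.repr.symm ((WithLp.equiv 2 _).symm p) : ↥P) : Ed d) := by
    intro p q
    rw [← OrthonormalBasis.sum_repr_symm, ← OrthonormalBasis.sum_repr_symm,
      ← OrthonormalBasis.sum_repr_symm]
    rw [Fintype.sum_sum_type]
    have e1 : ∀ x : Fin (Module.finrank ℝ ↥P),
        ((WithLp.equiv 2 ((Fin (Module.finrank ℝ ↥P) ⊕ Fin (Module.finrank ℝ ↥L)) → ℝ)).symm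
        ((MeasurableEquiv.sumPiEquivProdPi fun _ => ℝ).symm (p, q))) (Sum.inl x) = p x :=
      fun x => rfl
    have e2 : ∀ x : Fin (Module.finrank ℝ ↥L),
        ((WithLp.equiv 2 ((Fin (Module.finrank ℝ ↥P) ⊕ Fin (Module.finrank ℝ ↥L)) → ℝ)).symm
        ((MeasurableEquiv.sumPiEquivProdPi fun _ => ℝ).symm (p, q))) (Sum.inr x) = q x :=
      fun x => rfl
    simp only [e1, e2, hbl, hbr, WithLp.equiv_symm_apply, PiLp.toLp_apply, Submodule.coe_sum,
      SetLike.val_smul]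
    exact add_comm _ _
  have hmb : Measurable (⇑b.repr.symm) := b.repr.symm.continuous.measurable
  have hadd : Measurable fun z : ↥P × ↥L => f ((z.2 : Ed d) + (z.1 : Ed d)) :=
    hf.comp ((continuous_subtype_val.comp continuous_snd).add
      (continuous_subtype_val.comp continuous_fst)).measurable
  calc ∫⁻ x, f x
      = ∫⁻ w : EuclideanSpace ℝ (Fin (Module.finrank ℝ ↥P) ⊕ Fin (Module.finrank ℝ ↥L)),
          f (b.repr.symm w) := (b.measurePreserving_repr_symm.lintegral_comp hf).symm
    _ = ∫⁻ w : ((Fin (Module.finrank ℝ ↥P) ⊕ Fin (Module.finrank ℝ ↥L)) → ℝ),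
          f (b.repr.symm ((WithLp.equiv 2 _).symm w)) :=
        ((PiLp.volume_preserving_toLp _).lintegral_comp (hf.comp hmb)).symm
    _ = ∫⁻ z : ((Fin (Module.finrank ℝ ↥P) → ℝ) × (Fin (Module.finrank ℝ ↥L) → ℝ)),
          f (b.repr.symm ((WithLp.equiv 2 _).symm
            ((MeasurableEquiv.sumPiEquivProdPi (fun _ => ℝ)).symm z))) :=
        ((volume_measurePreserving_sumPiEquivProdPi_symm _).lintegral_comp
          ((hf.comp hmb).comp (PiLp.volume_preserving_toLp _).measurable)).symm
    _ = ∫⁻ z : ((Fin (Module.finrank ℝ ↥P) → ℝ) × (Fin (Module.finrank ℝ ↥L) → ℝ)),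
          f (((bL.repr.symm ((WithLp.equiv 2 _).symm z.2) : ↥L) : Ed d)
            + ((bP.repr.symm ((WithLp.equiv 2 _).symm z.1) : ↥P) : Ed d)) := by
        refine lintegral_congr fun z => ?_
        rw [← Prod.mk.eta (p := z), hb]
    _ = ∫⁻ p : (Fin (Module.finrank ℝ ↥P) → ℝ), ∫⁻ q : (Fin (Module.finrank ℝ ↥L) → ℝ),
          f (((bL.repr.symm ((WithLp.equiv 2 _).symm q) : ↥L) : Ed d)
            + ((bP.repr.symm ((WithLp.equiv 2 _).symm p) : ↥P) : Ed d)) := by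
        rw [MeasureTheory.Measure.volume_eq_prod, lintegral_prod]
        exact (hadd.comp
          (((bP.measurePreserving_repr_symm.comp (PiLp.volume_preserving_toLp _)).measurable.comp
              measurable_fst).prodMk
            ((bL.measurePreserving_repr_symm.comp (PiLp.volume_preserving_toLp _)).measurable.comp
              measurable_snd))).aemeasurable
    _ = ∫⁻ y : ↥P, ∫⁻ x : ↥L, f ((x : Ed d) + (y : Ed d)) := by
        rw [← (bP.measurePreserving_repr_symm.comp
            (PiLp.volume_preserving_toLp _)).lintegral_comp
          (f := fun y : ↥P => ∫⁻ x : ↥L, f ((x : Ed d) + (y : Ed d)))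
          (Measurable.lintegral_prod_right (f := fun (y : ↥P) (x : ↥L) => f ((x:Ed d)+(y:Ed d)))
            hadd)]
        refine lintegral_congr fun p => ?_
        simpa [Function.comp] using ((bL.measurePreserving_repr_symm.comp
            (PiLp.volume_preserving_toLp _)).lintegral_comp
          (f := fun x : ↥L => f ((x : Ed d)
            + ((bP.repr.symm ((WithLp.equiv 2 _).symm p) : ↥P) : Ed d)))
          (hf.comp (((continuous_subtype_val).add continuous_const).measurable)))

lemma plate_subset (d : ℕ) (L : Submodule ℝ (Ed d)) (δ : ℝ) (a : Ed d) :
    plate d L δ a ⊆ (Lᗮ.orthogonalProjectionOnto) ⁻¹' (ball (Lᗮ.orthogonalProjectionOnto a) δ) := by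
  intro x hx
  obtain ⟨s, ⟨hs1, _⟩, hds⟩ := Metric.mem_thickening_iff.mp hx
  have h0 : Lᗮ.orthogonalProjectionOnto (s - a) = 0 :=
    Submodule.orthogonalProjectionOnto_apply_of_mem_orthogonal
      (Submodule.le_orthogonal_orthogonal L hs1)
  have hsub : Lᗮ.orthogonalProjectionOnto x - Lᗮ.orthogonalProjectionOnto a
      = Lᗮ.orthogonalProjectionOnto (x - s) := by
    have : x - a = (x - s) + (s - a) := by abel
    rw [← map_sub, this, map_add, h0, add_zero]
  have hnorm : ‖Lᗮ.orthogonalProjectionOnto (x - s)‖ ≤ ‖x - s‖ := by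
    calc ‖Lᗮ.orthogonalProjectionOnto (x - s)‖ ≤ 1 * ‖x - s‖ :=
          ContinuousLinearMap.le_of_opNorm_le _ (Submodule.orthogonalProjectionOnto_norm_le _) _
      _ = ‖x - s‖ := one_mul _
  have : dist (Lᗮ.orthogonalProjectionOnto x) (Lᗮ.orthogonalProjectionOnto a) < δ := by
    rw [dist_eq_norm, hsub]
    exact lt_of_le_of_lt hnorm (by rwa [← dist_eq_norm])
  exact this

/-- Hölder bound for the integral over a plate in terms of the k-plane
transform. Here `r' ` is the conjugate exponent, so `(d-k)/r' = (d-k)(1-1/r)`. -/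
theorem stmt_7 (d k : ℕ) (hk : 1 ≤ k) (hkd : k < d) :
    ∃ C > (0:ℝ), ∀ (L : Submodule ℝ (Ed d)), Module.finrank ℝ L = k →
      ∀ (δ : ℝ), 0 < δ → ∀ a : Ed d, ∀ r : ℝ, 1 ≤ r →
      ∀ f : Ed d → ℝ≥0∞, Measurable f →
        (∫⁻ x in plate d L δ a, f x)
          ≤ ENNReal.ofReal (C * δ ^ (((d:ℝ) - k) * (1 - 1 / r))) *
            (∫⁻ y : (Lᗮ : Submodule ℝ (Ed d)),
              (∫⁻ x : (L : Submodule ℝ (Ed d)), f ((x : Ed d) + (y : Ed d))) ^ r) ^ (1 / r) := by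
  classical
  set VE : ℝ≥0∞ := volume (ball (0 : EuclideanSpace ℝ (Fin (d - k))) 1) with hVE
  refine ⟨max VE.toReal 1, lt_of_lt_of_le one_pos (le_max_right _ _), ?_⟩
  set C : ℝ := max VE.toReal 1 with hC
  intro L hL δ hδ a r hr f hf
  set g : (Lᗮ : Submodule ℝ (Ed d)) → ℝ≥0∞ :=
    fun y => ∫⁻ x : (L : Submodule ℝ (Ed d)), f ((x : Ed d) + (y : Ed d)) with hg
  set B : Set (Lᗮ : Submodule ℝ (Ed d)) := ball (Lᗮ.orthogonalProjectionOnto a) δ with hB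
  -- dimension facts
  have hfrL : Module.finrank ℝ (Lᗮ : Submodule ℝ (Ed d)) = d - k := by
    have h1 := Submodule.finrank_add_finrank_orthogonal (K := L)
    rw [hL, finrank_euclideanSpace_fin] at h1
    omega
  have hmeas_g : Measurable g := by
    apply Measurable.lintegral_prod_right (f := fun (y : (Lᗮ : Submodule ℝ (Ed d)))
      (x : (L : Submodule ℝ (Ed d))) => f ((x : Ed d) + (y : Ed d)))
    exact hf.comp ((continuous_subtype_val.comp continuous_snd).add
      (continuous_subtype_val.comp continuous_fst)).measurable
  -- Step A : integral over plate is at most integral of g over B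
  have stepA : (∫⁻ x in plate d L δ a, f x) ≤ ∫⁻ y in B, g y := by
    have hT : MeasurableSet ((Lᗮ.orthogonalProjectionOnto) ⁻¹' B) :=
      measurableSet_ball.preimage
        (Submodule.orthogonalProjectionOnto (Lᗮ : Submodule ℝ (Ed d))).continuous.measurable
    calc ∫⁻ x in plate d L δ a, f x
        ≤ ∫⁻ x in (Lᗮ.orthogonalProjectionOnto) ⁻¹' B, f x :=
          lintegral_mono_set (plate_subset d L δ a)
      _ = ∫⁻ x, ((Lᗮ.orthogonalProjectionOnto) ⁻¹' B).indicator f x := (lintegral_indicator hT f).symm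
      _ = ∫⁻ y : (Lᗮ : Submodule ℝ (Ed d)), ∫⁻ x : (L : Submodule ℝ (Ed d)),
            (((Lᗮ.orthogonalProjectionOnto) ⁻¹' B).indicator f) ((x : Ed d) + (y : Ed d)) :=
          fubini_orth d L _ (hf.indicator hT)
      _ = ∫⁻ y : (Lᗮ : Submodule ℝ (Ed d)), B.indicator g y := by
          refine lintegral_congr fun y => ?_
          have hP : ∀ x : (L : Submodule ℝ (Ed d)),
              Lᗮ.orthogonalProjectionOnto ((x : Ed d) + (y : Ed d)) = y := by
            intro x
            rw [map_add, Submodule.orthogonalProjectionOnto_apply_of_mem_orthogonal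
              (Submodule.le_orthogonal_orthogonal L x.2),
              Submodule.orthogonalProjectionOnto_mem_subspace_eq_self, zero_add]
          by_cases hy : y ∈ B
          · rw [indicator_of_mem hy]
            refine lintegral_congr fun x => ?_
            rw [indicator_of_mem]
            show Lᗮ.orthogonalProjectionOnto _ ∈ B
            rw [hP]; exact hy
          · rw [indicator_of_notMem hy]
            have hz : ∀ x : (L : Submodule ℝ (Ed d)),
                (((Lᗮ.orthogonalProjectionOnto) ⁻¹' B).indicator f) ((x : Ed d) + (y : Ed d)) = 0 := by
              intro x
              apply indicator_of_notMem
              show ¬ Lᗮ.orthogonalProjectionOnto _ ∈ B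
              rw [hP]; exact hy
            simp [hz]
      _ = ∫⁻ y in B, g y := lintegral_indicator measurableSet_ball g
  -- Step B : Hölder
  have stepB : (∫⁻ y in B, g y) ≤ (volume B) ^ (1 - 1/r) * (∫⁻ y, g y ^ r) ^ (1/r) := by
    rcases eq_or_lt_of_le hr with heq | hr1
    · rw [← heq]
      norm_num
      exact setLIntegral_le_lintegral _ _
    · have hpq : r.HolderConjugate (r / (r - 1)) := Real.HolderConjugate.conjExponent hr1
      have hqinv : (r / (r - 1))⁻¹ = 1 - 1/r := by
        rw [← hpq.one_sub_inv, one_div]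
      set ind : (Lᗮ : Submodule ℝ (Ed d)) → ℝ≥0∞ := B.indicator (fun _ => 1) with hind
      have h1 : ∀ y, (g * ind) y = B.indicator g y := by
        intro y
        by_cases hy : y ∈ B <;>
          simp [hind, hy, Set.indicator_of_mem, Set.indicator_of_notMem]
      have h2 : (∫⁻ y, (ind y) ^ (r/(r-1))) = volume B := by
        have e : ∀ y, (ind y) ^ (r/(r-1)) = ind y := by
          intro y
          by_cases hy : y ∈ B <;>
            simp [hind, hy, Set.indicator_of_mem, Set.indicator_of_notMem,
              ENNReal.zero_rpow_of_pos hpq.symm.pos]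
        rw [lintegral_congr e, hind, lintegral_indicator measurableSet_ball, setLIntegral_one]
      calc ∫⁻ y in B, g y = ∫⁻ y, B.indicator g y := (lintegral_indicator measurableSet_ball g).symm
        _ = ∫⁻ y, (g * ind) y := (lintegral_congr h1).symm
        _ ≤ (∫⁻ y, g y ^ r) ^ (1/r) * (∫⁻ y, (ind y) ^ (r/(r-1))) ^ (1/(r/(r-1))) :=
            ENNReal.lintegral_mul_le_Lp_mul_Lq volume hpq hmeas_g.aemeasurable
              ((measurable_const.indicator measurableSet_ball).aemeasurable)
        _ = (volume B) ^ (1 - 1/r) * (∫⁻ y, g y ^ r) ^ (1/r) := by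
            rw [h2, one_div (r/(r-1)), hqinv, mul_comm]
  -- Step C : volume of the ball
  have stepC : (volume B) ^ (1 - 1/r) ≤ ENNReal.ofReal (C * δ ^ (((d:ℝ) - k) * (1 - 1 / r))) := by
    have hr0 : (0:ℝ) < r := lt_of_lt_of_le one_pos hr
    have hs0 : (0:ℝ) ≤ 1 - 1/r := by
      have : 1/r ≤ 1 := by rw [div_le_one hr0]; exact hr
      linarith
    have hs1 : 1 - 1/r ≤ 1 := by
      have : (0:ℝ) ≤ 1/r := by positivity
      linarith
    set s : ℝ := 1 - 1/r with hsdef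
    have hnt : Nontrivial (Lᗮ : Submodule ℝ (Ed d)) := by
      apply Module.nontrivial_of_finrank_pos (R := ℝ)
        (M := (Lᗮ : Submodule ℝ (Ed d)))
      omega
    -- identify the unit-ball volume
    have hV : volume (ball (0 : (Lᗮ : Submodule ℝ (Ed d))) 1) = VE := by
      have h1 := ((stdOrthonormalBasis ℝ
        (Lᗮ : Submodule ℝ (Ed d))).measurePreserving_repr).measure_preimage
        (measurableSet_ball (x := (0 : EuclideanSpace ℝ (Fin (Module.finrank ℝ
          (Lᗮ : Submodule ℝ (Ed d)))))) (ε := (1:ℝ))).nullMeasurableSet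
      rw [LinearIsometryEquiv.preimage_ball, map_zero] at h1
      rw [h1]
      have h2 : ∀ n (hn : n = d - k), volume (ball (0 : EuclideanSpace ℝ (Fin n)) 1) = VE := by
        rintro n rfl; rfl
      exact h2 _ hfrL
    have hvolB : volume B = ENNReal.ofReal (δ ^ (Module.finrank ℝ (Lᗮ : Submodule ℝ (Ed d)))) * VE := by
      rw [hB, Measure.addHaar_ball _ _ hδ.le, hV]
    have hexp : ((δ : ℝ) ^ (Module.finrank ℝ (Lᗮ : Submodule ℝ (Ed d)))) ^ s
        = δ ^ (((d:ℝ) - k) * s) := by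
      rw [← Real.rpow_natCast δ (Module.finrank ℝ (Lᗮ : Submodule ℝ (Ed d))),
        ← Real.rpow_mul hδ.le]
      congr 1
      rw [hfrL, Nat.cast_sub hkd.le]
    have hVEfin : VE ≠ ∞ := measure_ball_lt_top.ne
    have hVEC : VE ^ s ≤ ENNReal.ofReal C := by
      rcases le_total VE 1 with h | h
      · exact (ENNReal.rpow_le_one h hs0).trans
          (ENNReal.one_le_ofReal.mpr (le_max_right _ _))
      · calc VE ^ s ≤ VE ^ (1:ℝ) := ENNReal.rpow_le_rpow_of_exponent_le h hs1
          _ = VE := ENNReal.rpow_one _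
          _ = ENNReal.ofReal VE.toReal := (ENNReal.ofReal_toReal hVEfin).symm
          _ ≤ ENNReal.ofReal C := ENNReal.ofReal_le_ofReal (le_max_left _ _)
    calc (volume B) ^ s
        = ENNReal.ofReal (δ ^ (Module.finrank ℝ (Lᗮ : Submodule ℝ (Ed d)))) ^ s * VE ^ s := by
          rw [hvolB, ENNReal.mul_rpow_of_nonneg _ _ hs0]
      _ = ENNReal.ofReal (δ ^ (((d:ℝ) - k) * s)) * VE ^ s := by
          rw [ENNReal.ofReal_rpow_of_pos (pow_pos hδ _), hexp]
      _ ≤ ENNReal.ofReal (δ ^ (((d:ℝ) - k) * s)) * ENNReal.ofReal C :=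
          mul_le_mul_right hVEC _
      _ = ENNReal.ofReal (C * δ ^ (((d:ℝ) - k) * s)) := by
          rw [← ENNReal.ofReal_mul (by positivity), mul_comm]
  exact stepA.trans (stepB.trans (mul_le_mul_left stepC _))
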